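/- Let P*(n) be defined by the generating function ∑_{n≥0} P*(n) q^n = ∏_{i≥1}(1-q^i)^4 (1-q^{5i})^4. Then for all n ≥ 0, P*(2n+1) ≡ 0 (mod 4). -/

import Mathlib

open PowerSeries

/-- `f k` is the formal power series `∏_{i≥1} (1 - q^{k i})` over `ℤ`:
its `n`-th coefficient is the `n`-th coefficient of the partial product
`∏_{i=1}^{n+1} (1 - q^{k i})`, which stabilizes. -/
noncomputable def f (k : ℕ) : PowerSeries ℤ :=
  PowerSeries.mk fun n =>
    PowerSeries.coeff (R := ℤ) n
      (∏ i ∈ Finset.range (n + 1), (1 - (PowerSeries.X : PowerSeries ℤ) ^ (k * (i + 1))))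

/-- The multiplicative inverse `1 / f k` (the constant coefficient of `f k` is `1`). -/
noncomputable def finv (k : ℕ) : PowerSeries ℤ := PowerSeries.invOfUnit (f k) 1

section Aux

variable {R : Type*} [CommRing R]

lemma coeff_mul_congr {A B C D : PowerSeries R} {n : ℕ}
    (hAB : ∀ j ≤ n, coeff (R := R) j A = coeff (R := R) j B)
    (hCD : ∀ j ≤ n, coeff (R := R) j C = coeff (R := R) j D) :
    ∀ j ≤ n, coeff (R := R) j (A * C) = coeff (R := R) j (B * D) := by
  intro j hj
  rw [coeff_mul, coeff_mul]
  apply Finset.sum_congr rfl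
  intro p hp
  rw [Finset.HasAntidiagonal.mem_antidiagonal] at hp
  rw [hAB p.1 (by omega), hCD p.2 (by omega)]

lemma coeff_pow_congr {A B : PowerSeries R} {n : ℕ}
    (h : ∀ j ≤ n, coeff (R := R) j A = coeff (R := R) j B) (a : ℕ) :
    ∀ j ≤ n, coeff (R := R) j (A ^ a) = coeff (R := R) j (B ^ a) := by
  induction a with
  | zero => intro j hj; simp
  | succ a ih =>
    intro j hj
    rw [pow_succ, pow_succ]
    exact coeff_mul_congr ih h j hj

lemma coeff_f_eq (k : ℕ) (hk : 1 ≤ k) (n m : ℕ) (hm : n < m) :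
    coeff (R := ℤ) n (f k) =
      coeff (R := ℤ) n (∏ i ∈ Finset.range m, (1 - (X : PowerSeries ℤ) ^ (k * (i + 1)))) := by
  induction m with
  | zero => omega
  | succ m ih =>
    rcases Nat.lt_or_ge n m with h | h
    · rw [ih h, Finset.prod_range_succ, mul_sub, mul_one, map_sub]
      have hz : coeff (R := ℤ) n
          ((∏ i ∈ Finset.range m, (1 - (X : PowerSeries ℤ) ^ (k * (i + 1))))
            * X ^ (k * (m + 1))) = 0 := by
        rw [PowerSeries.coeff_mul_X_pow']
        have : ¬ k * (m + 1) ≤ n := by nlinarith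
        simp [this]
      rw [hz, sub_zero]
    · have hnm : n = m := by omega
      subst hnm
      simp [f, coeff_mk]

def IsEvenSeries (A : PowerSeries R) : Prop := ∀ j : ℕ, Odd j → coeff (R := R) j A = 0

lemma IsEvenSeries.mul {A B : PowerSeries R} (hA : IsEvenSeries A) (hB : IsEvenSeries B) :
    IsEvenSeries (A * B) := by
  intro j hj
  rw [coeff_mul]
  apply Finset.sum_eq_zero
  intro p hp
  rw [Finset.HasAntidiagonal.mem_antidiagonal] at hp
  rcases Nat.even_or_odd p.1 with h | h
  · have : Odd p.2 := by
      rw [Nat.odd_iff] at hj ⊢; rw [Nat.even_iff] at h; omega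
    rw [hB _ this, mul_zero]
  · rw [hA _ h, zero_mul]

lemma isEvenSeries_one : IsEvenSeries (1 : PowerSeries R) := by
  intro j hj
  have : j ≠ 0 := by rintro rfl; simp [Nat.odd_iff] at hj
  simp [coeff_one, this]

lemma isEvenSeries_one_sub_X_pow (t : ℕ) :
    IsEvenSeries (1 - (X : PowerSeries R) ^ (2 * t)) := by
  intro j hj
  have h0 : j ≠ 0 := by rintro rfl; simp [Nat.odd_iff] at hj
  have h2 : j ≠ 2 * t := by
    rintro rfl; rw [Nat.odd_iff] at hj; omega
  rw [map_sub, coeff_X_pow]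
  simp [coeff_one, h0, h2]

lemma key_factor (c : ℕ) :
    (1 - (X : PowerSeries (ZMod 4)) ^ c) ^ 4 = (1 - (X : PowerSeries (ZMod 4)) ^ (2 * c)) ^ 2 := by
  have h4 : (4 : PowerSeries (ZMod 4)) = 0 := by
    rw [← map_ofNat (C (R := ZMod 4)) 4, show (4 : ZMod 4) = 0 from rfl, map_zero]
  have hx : (X : PowerSeries (ZMod 4)) ^ (2 * c) = (X ^ c) ^ 2 := by
    rw [← pow_mul, mul_comm]
  rw [hx]
  linear_combination (-(X : PowerSeries (ZMod 4)) ^ c * (1 - X ^ c) ^ 2) * h4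

end Aux

theorem stmt0 : ∀ n : ℕ, (4 : ℤ) ∣ PowerSeries.coeff (R := ℤ) (2 * n + 1) (f 1 ^ 4 * f 5 ^ 4) := by
  intro n
  set N := 2 * n + 1 with hN
  set P : PowerSeries ℤ := ∏ i ∈ Finset.range (N + 1), (1 - (X : PowerSeries ℤ) ^ (1 * (i + 1))) with hPdef
  set Q : PowerSeries ℤ := ∏ i ∈ Finset.range (N + 1), (1 - (X : PowerSeries ℤ) ^ (5 * (i + 1))) with hQdef
  have hP : ∀ j ≤ N, coeff (R := ℤ) j (f 1) = coeff (R := ℤ) j P := fun j hj =>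
    coeff_f_eq 1 le_rfl j (N + 1) (by omega)
  have hQ : ∀ j ≤ N, coeff (R := ℤ) j (f 5) = coeff (R := ℤ) j Q := fun j hj =>
    coeff_f_eq 5 (by norm_num) j (N + 1) (by omega)
  have key : coeff (R := ℤ) N (f 1 ^ 4 * f 5 ^ 4) = coeff (R := ℤ) N (P ^ 4 * Q ^ 4) :=
    coeff_mul_congr (coeff_pow_congr hP 4) (coeff_pow_congr hQ 4) N le_rfl
  rw [key]
  -- pass to ZMod 4
  have hcast : ((coeff (R := ℤ) N (P ^ 4 * Q ^ 4) : ℤ) : ZMod 4) = 0 := by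
    set φ : ℤ →+* ZMod 4 := Int.castRingHom (ZMod 4)
    have : ((coeff (R := ℤ) N (P ^ 4 * Q ^ 4) : ℤ) : ZMod 4)
        = coeff (R := (ZMod 4)) N (PowerSeries.map φ (P ^ 4 * Q ^ 4)) := by
      rw [PowerSeries.coeff_map]; rfl
    rw [this, map_mul, map_pow, map_pow]
    have hPmap : PowerSeries.map φ P
        = ∏ i ∈ Finset.range (N + 1), (1 - (X : PowerSeries (ZMod 4)) ^ (1 * (i + 1))) := by
      rw [hPdef, map_prod]
      apply Finset.prod_congr rfl
      intro i _
      rw [map_sub, map_one, map_pow, PowerSeries.map_X]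
    have hQmap : PowerSeries.map φ Q
        = ∏ i ∈ Finset.range (N + 1), (1 - (X : PowerSeries (ZMod 4)) ^ (5 * (i + 1))) := by
      rw [hQdef, map_prod]
      apply Finset.prod_congr rfl
      intro i _
      rw [map_sub, map_one, map_pow, PowerSeries.map_X]
    rw [hPmap, hQmap, ← Finset.prod_pow, ← Finset.prod_pow]
    have hPfin : ∀ i ∈ Finset.range (N + 1),
        (1 - (X : PowerSeries (ZMod 4)) ^ (1 * (i + 1))) ^ 4
          = (1 - (X : PowerSeries (ZMod 4)) ^ (2 * (1 * (i + 1)))) ^ 2 := fun i _ =>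
      key_factor _
    have hQfin : ∀ i ∈ Finset.range (N + 1),
        (1 - (X : PowerSeries (ZMod 4)) ^ (5 * (i + 1))) ^ 4
          = (1 - (X : PowerSeries (ZMod 4)) ^ (2 * (5 * (i + 1)))) ^ 2 := fun i _ =>
      key_factor _
    rw [Finset.prod_congr rfl hPfin, Finset.prod_congr rfl hQfin]
    have heven : IsEvenSeries
        ((∏ i ∈ Finset.range (N + 1), (1 - (X : PowerSeries (ZMod 4)) ^ (2 * (1 * (i + 1)))) ^ 2)
          * (∏ i ∈ Finset.range (N + 1), (1 - (X : PowerSeries (ZMod 4)) ^ (2 * (5 * (i + 1)))) ^ 2)) := by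
      apply IsEvenSeries.mul
      all_goals
        apply Finset.prod_induction _ IsEvenSeries (fun _ _ => IsEvenSeries.mul) isEvenSeries_one
        intro i _
        rw [sq]
        exact (isEvenSeries_one_sub_X_pow _).mul (isEvenSeries_one_sub_X_pow _)
    exact heven N ⟨n, by omega⟩
  have := (ZMod.intCast_zmod_eq_zero_iff_dvd _ 4).mp hcast
  exact_mod_cast this
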